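/- Let N ≥ 1, let 1 ≤ k ≤ N and p ≥ 0 be integers, and let σ̂₁ ≥ … ≥ σ̂_N ≥ 0 and σ₁ ≥ … ≥ σ_N ≥ 0 be nonincreasing sequences with σ̂_j ≥ σ_j for 1 ≤ j ≤ k and σ̂_j ≤ σ_j for k < j ≤ N. Let Σ = diag(σ₁,…,σ_N) and Σ̂ = diag(σ̂₁,…,σ̂_N), let E_k be the span of the first k standard basis vectors of ℝ^N, and let Ω be a standard Gaussian random N×(k+p) matrix. Then for every real t, ℙ( sinθ₁(E_k, range(ΣΩ)) < t ) ≤ ℙ( sinθ₁(E_k, range(Σ̂Ω)) < t ). That is, the largest principal angle of the randomized range finder is stochastically smaller for the matrix with larger leading singular values and smaller tail singular values. -/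

import Mathlib

open MeasureTheory ProbabilityTheory Matrix

noncomputable section

/-- Matrices carry the product (Borel) measurable structure, entrywise. -/
instance (n ℓ : ℕ) : MeasurableSpace (Matrix (Fin n) (Fin ℓ) ℝ) := MeasurableSpace.pi

/-- The law of a standard Gaussian random `n × ℓ` matrix: i.i.d. `N(0,1)` entries. -/
def stdGaussMat (n ℓ : ℕ) : Measure (Matrix (Fin n) (Fin ℓ) ℝ) :=
  Measure.pi fun _ : Fin n => Measure.pi fun _ : Fin ℓ => gaussianReal 0 1

/-- Identification of `Fin m → ℝ` with Euclidean space `ℝ^m`. -/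
def toE {m : ℕ} : (Fin m → ℝ) ≃ₗ[ℝ] EuclideanSpace ℝ (Fin m) :=
  (WithLp.linearEquiv 2 ℝ (Fin m → ℝ)).symm

/-- The column space of a matrix, as a subspace of Euclidean space. -/
def colSpaceE {m n : ℕ} (A : Matrix (Fin m) (Fin n) ℝ) :
    Submodule ℝ (EuclideanSpace ℝ (Fin m)) :=
  (LinearMap.range A.mulVecLin).map toE.toLinearMap

/-- The sine of the largest principal angle between subspaces `U` and `W`:
`‖(id − P_W) ∘ P_U‖`, where `P` denotes orthogonal projection. -/
def sinTheta {H : Type} [NormedAddCommGroup H] [InnerProductSpace ℝ H]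
    [FiniteDimensional ℝ H] (U W : Submodule ℝ H) : ℝ :=
  ‖((ContinuousLinearMap.id ℝ H) - W.subtypeL.comp W.orthogonalProjectionOnto).comp
      (U.subtypeL.comp U.orthogonalProjectionOnto)‖

/-- The span of the first `k` columns of a matrix `U`, as a subspace of Euclidean space. -/
def spanCols {m N : ℕ} (U : Matrix (Fin m) (Fin N) ℝ) (k : ℕ) :
    Submodule ℝ (EuclideanSpace ℝ (Fin m)) :=
  Submodule.span ℝ {x | ∃ j : Fin N, (j : ℕ) < k ∧ x = toE (fun i => U i j)}

/-- The span of the first `k` standard basis vectors of `ℝ^N`. -/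
def stdSubspace (N k : ℕ) : Submodule ℝ (EuclideanSpace ℝ (Fin N)) :=
  Submodule.span ℝ {x | ∃ j : Fin N, (j : ℕ) < k ∧ x = EuclideanSpace.single j 1}

/-! ### Auxiliary lemmas -/

open scoped RealInnerProductSpace

namespace RRFAux

lemma toE_apply {m : ℕ} (f : Fin m → ℝ) (j : Fin m) : toE f j = f j := rfl

lemma inner_euc {m : ℕ} (x y : EuclideanSpace ℝ (Fin m)) : ⟪x, y⟫ = ∑ j, x j * y j := by
  simp [PiLp.inner_apply, RCLike.inner_apply, conj_trivial, mul_comm]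

lemma norm_euc {m : ℕ} (x : EuclideanSpace ℝ (Fin m)) : ‖x‖ = Real.sqrt (∑ j, x j ^ 2) := by
  rw [EuclideanSpace.norm_eq]
  simp [Real.norm_eq_abs, sq_abs]

lemma mem_colSpaceE {m n : ℕ} {A : Matrix (Fin m) (Fin n) ℝ} {x : EuclideanSpace ℝ (Fin m)} :
    x ∈ colSpaceE A ↔ ∃ c : Fin n → ℝ, x = toE (A.mulVec c) := by
  simp only [colSpaceE, Submodule.mem_map, LinearMap.mem_range, Matrix.mulVecLin_apply,
    LinearEquiv.coe_coe]
  constructor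
  · rintro ⟨y, ⟨c, rfl⟩, rfl⟩; exact ⟨c, rfl⟩
  · rintro ⟨c, rfl⟩; exact ⟨A.mulVec c, ⟨c, rfl⟩, rfl⟩

lemma mem_colSpaceE_orth {m n : ℕ} {A : Matrix (Fin m) (Fin n) ℝ}
    {z : EuclideanSpace ℝ (Fin m)} :
    z ∈ (colSpaceE A)ᗮ ↔ ∀ c : Fin n → ℝ, ∑ j, A.mulVec c j * z j = 0 := by
  rw [Submodule.mem_orthogonal]
  constructor
  · intro h c
    have := h (toE (A.mulVec c)) (mem_colSpaceE.2 ⟨c, rfl⟩)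
    rwa [inner_euc] at this
  · intro h w hw
    obtain ⟨c, rfl⟩ := mem_colSpaceE.1 hw
    rw [inner_euc]
    exact h c

lemma diag_mulVec {m n : ℕ} (σ : Fin m → ℝ) (Ω : Matrix (Fin m) (Fin n) ℝ)
    (c : Fin n → ℝ) (i : Fin m) :
    ((Matrix.diagonal σ * Ω).mulVec c) i = σ i * (Ω.mulVec c) i := by
  rw [← Matrix.mulVec_mulVec, Matrix.mulVec_diagonal]

/-- The truncation of a vector to its first `k` coordinates. -/
def trunc {N : ℕ} (k : ℕ) (x : EuclideanSpace ℝ (Fin N)) : EuclideanSpace ℝ (Fin N) :=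
  toE (fun j => if (j : ℕ) < k then x j else 0)

lemma trunc_apply {N : ℕ} (k : ℕ) (x : EuclideanSpace ℝ (Fin N)) (j : Fin N) :
    trunc k x j = if (j : ℕ) < k then x j else 0 := rfl

lemma trunc_mem {N k : ℕ} (x : EuclideanSpace ℝ (Fin N)) : trunc k x ∈ stdSubspace N k := by
  have hsum : trunc k x =
      ∑ j ∈ Finset.univ.filter (fun j : Fin N => (j : ℕ) < k),
        x j • EuclideanSpace.single j 1 := by
    ext i
    rw [show ((∑ j ∈ Finset.univ.filter (fun j : Fin N => (j : ℕ) < k),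
        x j • EuclideanSpace.single j 1 : EuclideanSpace ℝ (Fin N))) i
        = (EuclideanSpace.proj (𝕜 := ℝ) i)
          (∑ j ∈ Finset.univ.filter (fun j : Fin N => (j : ℕ) < k),
            x j • EuclideanSpace.single j 1) from rfl, map_sum]
    have : ∀ j : Fin N, (EuclideanSpace.proj (𝕜 := ℝ) i) (x j • EuclideanSpace.single j 1)
        = if j = i then x j else 0 := by
      intro j
      simp [EuclideanSpace.single_apply, PiLp.proj_apply]
      simp [eq_comm]
    simp only [this]
    rw [Finset.sum_ite_eq']
    simp [trunc_apply]
  rw [hsum]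
  refine Submodule.sum_mem _ fun j hj => Submodule.smul_mem _ _ (Submodule.subset_span ?_)
  exact ⟨j, (Finset.mem_filter.1 hj).2, rfl⟩

lemma sub_trunc_mem_orth {N k : ℕ} (x : EuclideanSpace ℝ (Fin N)) :
    x - trunc k x ∈ (stdSubspace N k)ᗮ := by
  rw [Submodule.mem_orthogonal]
  intro u hu
  induction hu using Submodule.span_induction with
  | mem u hu =>
    obtain ⟨j, hj, rfl⟩ := hu
    rw [inner_euc]
    have : ∀ i : Fin N, (EuclideanSpace.single j (1:ℝ)) i * (x - trunc k x) i
        = if i = j then (x - trunc k x) j else 0 := by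
      intro i
      rcases eq_or_ne i j with h | h
      · subst h; simp [EuclideanSpace.single_apply]
      · simp [EuclideanSpace.single_apply, h]
    rw [Finset.sum_congr rfl (fun i _ => this i), Finset.sum_ite_eq']
    simp [PiLp.sub_apply, trunc_apply, hj]
  | zero => simp
  | add u v _ _ h1 h2 => rw [inner_add_left, h1, h2]; simp
  | smul a u _ h1 => rw [real_inner_smul_left, h1]; simp

lemma proj_std_eq {N k : ℕ} (x : EuclideanSpace ℝ (Fin N)) :
    (Submodule.orthogonalProjectionOnto (stdSubspace N k) x : EuclideanSpace ℝ (Fin N)) = trunc k x :=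
  Submodule.eq_starProjection_of_mem_orthogonal (trunc_mem x) (sub_trunc_mem_orth x)

section Hilbert

variable {H : Type} [NormedAddCommGroup H] [InnerProductSpace ℝ H] [FiniteDimensional ℝ H]

lemma norm_coe_proj_le (K : Submodule ℝ H) (x : H) :
    ‖(Submodule.orthogonalProjectionOnto K x : H)‖ ≤ ‖x‖ := by
  calc ‖(Submodule.orthogonalProjectionOnto K x : H)‖ = ‖Submodule.orthogonalProjectionOnto K x‖ := rfl
    _ ≤ ‖(Submodule.orthogonalProjectionOnto K : H →L[ℝ] K)‖ * ‖x‖ := ContinuousLinearMap.le_opNorm _ _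
    _ ≤ 1 * ‖x‖ := by
        exact mul_le_mul_of_nonneg_right (Submodule.orthogonalProjectionOnto_norm_le _) (norm_nonneg _)
    _ = ‖x‖ := one_mul _

lemma sinTheta_le_one (U W : Submodule ℝ H) : sinTheta U W ≤ 1 := by
  refine ContinuousLinearMap.opNorm_le_bound _ zero_le_one fun x => ?_
  rw [one_mul]
  simp only [ContinuousLinearMap.comp_apply, ContinuousLinearMap.sub_apply,
    ContinuousLinearMap.id_apply, Submodule.subtypeL_apply]
  calc ‖(Submodule.orthogonalProjectionOnto U x : H) -
        (Submodule.orthogonalProjectionOnto W ((Submodule.orthogonalProjectionOnto U x : H)) : H)‖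
      = ‖(Submodule.orthogonalProjectionOnto Wᗮ ((Submodule.orthogonalProjectionOnto U x : H)) : H)‖ := by
        exact congrArg norm (Submodule.starProjection_orthogonal_val (K := W) _).symm
    _ ≤ ‖(Submodule.orthogonalProjectionOnto U x : H)‖ := norm_coe_proj_le _ _
    _ ≤ ‖x‖ := norm_coe_proj_le _ _

lemma one_le_sinTheta (U W : Submodule ℝ H) (x : H) (hxU : x ∈ U) (hxW : x ∈ Wᗮ)
    (hx : ‖x‖ = 1) : 1 ≤ sinTheta U W := by
  have hproj : (Submodule.orthogonalProjectionOnto U x : H) = x :=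
    Submodule.eq_starProjection_of_mem_orthogonal hxU (by simp)
  have hWx : Submodule.orthogonalProjectionOnto W x = 0 :=
    Submodule.orthogonalProjectionOnto_apply_of_mem_orthogonal hxW
  have hT : (((ContinuousLinearMap.id ℝ H) - W.subtypeL.comp (Submodule.orthogonalProjectionOnto W)).comp
      (U.subtypeL.comp (Submodule.orthogonalProjectionOnto U))) x = x := by
    simp only [ContinuousLinearMap.comp_apply, ContinuousLinearMap.sub_apply,
      ContinuousLinearMap.id_apply, Submodule.subtypeL_apply, hproj, hWx]
    simp
  have := ContinuousLinearMap.le_opNorm (((ContinuousLinearMap.id ℝ H) -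
      W.subtypeL.comp (Submodule.orthogonalProjectionOnto W)).comp
      (U.subtypeL.comp (Submodule.orthogonalProjectionOnto U))) x
  rw [hT, hx, mul_one] at this
  exact this

lemma proj_le_sinTheta (U W : Submodule ℝ H) (y : H) (hy : y ∈ Wᗮ) :
    ‖(Submodule.orthogonalProjectionOnto U y : H)‖ ≤ sinTheta U W * ‖y‖ := by
  set B : H →L[ℝ] H := U.subtypeL.comp (Submodule.orthogonalProjectionOnto U) with hBdef
  set A : H →L[ℝ] H := (ContinuousLinearMap.id ℝ H) -
      W.subtypeL.comp (Submodule.orthogonalProjectionOnto W) with hAdef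
  have hA : ContinuousLinearMap.adjoint A = A := by
    rw [hAdef, map_sub, ContinuousLinearMap.adjoint_id,
      (show IsSelfAdjoint (W.subtypeL.comp (Submodule.orthogonalProjectionOnto W)) from
        isSelfAdjoint_starProjection W).adjoint_eq]
  have hB : ContinuousLinearMap.adjoint B = B := (isSelfAdjoint_starProjection U).adjoint_eq
  have h1 : ContinuousLinearMap.adjoint (A.comp B) = B.comp A := by
    rw [ContinuousLinearMap.adjoint_comp, hA, hB]
  have h2 : ‖B.comp A‖ = ‖A.comp B‖ := by
    rw [← h1]
    exact ContinuousLinearMap.adjoint.norm_map (A.comp B)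
  have h3 : A y = y := by
    rw [hAdef]
    simp only [ContinuousLinearMap.sub_apply, ContinuousLinearMap.id_apply,
      ContinuousLinearMap.comp_apply, Submodule.subtypeL_apply,
      Submodule.orthogonalProjectionOnto_apply_of_mem_orthogonal hy]
    simp
  calc ‖(Submodule.orthogonalProjectionOnto U y : H)‖ = ‖(B.comp A) y‖ := by
        rw [ContinuousLinearMap.comp_apply, h3]; rfl
    _ ≤ ‖B.comp A‖ * ‖y‖ := ContinuousLinearMap.le_opNorm _ _
    _ = sinTheta U W * ‖y‖ := by rw [h2]; rfl

lemma sinTheta_le_of_orth_bound (U W W' : Submodule ℝ H)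
    (h : ∀ r ∈ W'ᗮ, ‖(Submodule.orthogonalProjectionOnto U r : H)‖ ≤ sinTheta U W * ‖r‖) :
    sinTheta U W' ≤ sinTheta U W := by
  refine ContinuousLinearMap.opNorm_le_bound _ (norm_nonneg _) fun x => ?_
  simp only [ContinuousLinearMap.comp_apply, ContinuousLinearMap.sub_apply,
    ContinuousLinearMap.id_apply, Submodule.subtypeL_apply]
  set u : H := (Submodule.orthogonalProjectionOnto U x : H) with hu
  set r : H := u - (Submodule.orthogonalProjectionOnto W' u : H) with hrdef
  have hr : r ∈ W'ᗮ := Submodule.sub_starProjection_mem_orthogonal u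
  have hrr : ‖r‖ ^ 2 = ⟪u, r⟫ := by
    have horth : ⟪(Submodule.orthogonalProjectionOnto W' u : H), r⟫ = 0 :=
      (Submodule.mem_orthogonal _ r).1 hr _ (Submodule.orthogonalProjectionOnto W' u).2
    rw [← real_inner_self_eq_norm_sq]
    rw [hrdef]
    rw [inner_sub_left, horth, sub_zero]
  have hur : ⟪u, r⟫ ≤ ‖x‖ * (sinTheta U W * ‖r‖) := by
    calc ⟪u, r⟫ = ⟪x, (Submodule.orthogonalProjectionOnto U r : H)⟫ := by
          rw [hu]; exact Submodule.inner_starProjection_left_eq_right U x r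
      _ ≤ ‖x‖ * ‖(Submodule.orthogonalProjectionOnto U r : H)‖ := real_inner_le_norm _ _
      _ ≤ ‖x‖ * (sinTheta U W * ‖r‖) :=
          mul_le_mul_of_nonneg_left (h r hr) (norm_nonneg _)
  have hgoal : ‖r‖ ≤ sinTheta U W * ‖x‖ := by
    rcases eq_or_lt_of_le (norm_nonneg r) with h0 | h0
    · rw [← h0]
      have h1 : (0:ℝ) ≤ sinTheta U W := norm_nonneg _
      positivity
    · nlinarith [hrr.le.trans hur]
  exact hgoal

end Hilbert

lemma div_trick {a a' Y Z s : ℝ} (h1 : a * Y ≤ a' * Z) (h2 : a' ≤ s * Y)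
    (hY : 0 < Y) (hZ : 0 ≤ Z) : a ≤ s * Z := by
  nlinarith

set_option maxHeartbeats 1000000 in
/-- The key deterministic comparison. -/
lemma key_det {N ℓ k : ℕ} (σ σ' : Fin N → ℝ)
    (hσ0 : ∀ j, 0 ≤ σ j) (hσ'0 : ∀ j, 0 ≤ σ' j)
    (h_lead : ∀ j : Fin N, (j : ℕ) < k → σ j ≤ σ' j)
    (h_tail : ∀ j : Fin N, k ≤ (j : ℕ) → σ' j ≤ σ j)
    (Ω : Matrix (Fin N) (Fin ℓ) ℝ) :
    sinTheta (stdSubspace N k) (colSpaceE (Matrix.diagonal σ' * Ω)) ≤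
      sinTheta (stdSubspace N k) (colSpaceE (Matrix.diagonal σ * Ω)) := by
  by_cases hdeg : ∃ j : Fin N, (j : ℕ) < k ∧ σ j = 0
  · obtain ⟨j, hjk, hj0⟩ := hdeg
    refine le_trans (sinTheta_le_one _ _) (one_le_sinTheta _ _ (EuclideanSpace.single j 1)
      (Submodule.subset_span ⟨j, hjk, rfl⟩) ?_ ?_)
    · rw [mem_colSpaceE_orth]
      intro c
      have : ∀ i : Fin N, (Matrix.diagonal σ * Ω).mulVec c i * (EuclideanSpace.single j (1:ℝ)) i
          = if i = j then (Matrix.diagonal σ * Ω).mulVec c j else 0 := by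
        intro i
        rcases eq_or_ne i j with h | h
        · subst h; simp [EuclideanSpace.single_apply]
        · simp [EuclideanSpace.single_apply, h]
      rw [Finset.sum_congr rfl (fun i _ => this i), Finset.sum_ite_eq']
      simp [diag_mulVec, hj0]
    · simp [EuclideanSpace.norm_single]
  · push_neg at hdeg
    have hpos : ∀ j : Fin N, (j : ℕ) < k → 0 < σ j :=
      fun j hj => lt_of_le_of_ne (hσ0 j) (Ne.symm (hdeg j hj))
    set d : Fin N → ℝ := fun j => σ' j / σ j with hd
    have hσ'd : ∀ j, σ' j = d j * σ j := by
      intro j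
      by_cases h : σ j = 0
      · have hj' : σ' j = 0 := by
          rcases lt_or_ge ((j : ℕ)) k with hj | hj
          · exact absurd h (hdeg j hj)
          · exact le_antisymm (h ▸ h_tail j hj) (hσ'0 j)
        simp [hj', h]
      · exact (div_mul_cancel₀ (σ' j) h).symm
    have hd0 : ∀ j, 0 ≤ d j := fun j => div_nonneg (hσ'0 j) (hσ0 j)
    apply sinTheta_le_of_orth_bound
    intro z hz
    set y : EuclideanSpace ℝ (Fin N) := toE (fun j => d j * z j) with hy
    have hyap : ∀ j, y j = d j * z j := fun j => rfl
    have hyW : y ∈ (colSpaceE (Matrix.diagonal σ * Ω))ᗮ := by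
      rw [mem_colSpaceE_orth]
      intro c
      have h0 := mem_colSpaceE_orth.1 hz c
      rw [← h0]
      refine Finset.sum_congr rfl fun i _ => ?_
      rw [diag_mulVec, diag_mulVec]
      have : y i = d i * z i := rfl
      rw [this, hσ'd i]
      ring
    have hPy := proj_le_sinTheta (stdSubspace N k) (colSpaceE (Matrix.diagonal σ * Ω)) y hyW
    -- now the coordinate comparison
    set F := Finset.univ.filter (fun j : Fin N => (j : ℕ) < k) with hF
    set Fc := Finset.univ.filter (fun j : Fin N => ¬ (j : ℕ) < k) with hFc
    set Az := ∑ j ∈ F, z j ^ 2 with hAz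
    set Bz := ∑ j ∈ Fc, z j ^ 2 with hBz
    set Ay := ∑ j ∈ F, (d j * z j) ^ 2 with hAy
    set By := ∑ j ∈ Fc, (d j * z j) ^ 2 with hBy
    have hAz0 : 0 ≤ Az := Finset.sum_nonneg fun _ _ => sq_nonneg _
    have hBz0 : 0 ≤ Bz := Finset.sum_nonneg fun _ _ => sq_nonneg _
    have hAy0 : 0 ≤ Ay := Finset.sum_nonneg fun _ _ => sq_nonneg _
    have hBy0 : 0 ≤ By := Finset.sum_nonneg fun _ _ => sq_nonneg _
    have hAzAy : Az ≤ Ay := by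
      refine Finset.sum_le_sum fun j hj => ?_
      have h1 : 1 ≤ d j := by
        have hjk := (Finset.mem_filter.1 hj).2
        rw [hd]
        exact (one_le_div (hpos j hjk)).2 (h_lead j hjk)
      have h2 : (0:ℝ) ≤ d j ^ 2 - 1 := by nlinarith [sq_nonneg (d j - 1)]
      nlinarith [mul_nonneg h2 (sq_nonneg (z j))]
    have hByBz : By ≤ Bz := by
      refine Finset.sum_le_sum fun j hj => ?_
      have hjk := (Finset.mem_filter.1 hj).2
      have h1 : d j ≤ 1 := by
        rcases eq_or_lt_of_le (hσ0 j) with h | h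
        · simp [hd, ← h]
        · rw [hd]
          exact div_le_one_of_le₀ (h_tail j (le_of_not_gt hjk)) (le_of_lt h)
      have h2 : (0:ℝ) ≤ 1 - d j ^ 2 := by nlinarith [hd0 j]
      nlinarith [mul_nonneg h2 (sq_nonneg (z j))]
    -- norm identities
    have split_sum : ∀ w : EuclideanSpace ℝ (Fin N),
        (∑ j, w j ^ 2) = (∑ j ∈ F, w j ^ 2) + (∑ j ∈ Fc, w j ^ 2) := by
      intro w
      rw [hF, hFc]
      exact (Finset.sum_filter_add_sum_filter_not _ _ _).symm
    have hnz : ‖z‖ = Real.sqrt (Az + Bz) := by rw [norm_euc, split_sum z]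
    have hny : ‖y‖ = Real.sqrt (Ay + By) := by
      rw [norm_euc, split_sum y]
      simp only [hyap, hAy, hBy]
    have htrunc_norm : ∀ w : EuclideanSpace ℝ (Fin N),
        ‖(Submodule.orthogonalProjectionOnto (stdSubspace N k) w : EuclideanSpace ℝ (Fin N))‖
          = Real.sqrt (∑ j ∈ F, w j ^ 2) := by
      intro w
      rw [proj_std_eq, norm_euc]
      congr 1
      rw [hF, Finset.sum_filter]
      refine Finset.sum_congr rfl fun j _ => ?_
      rw [trunc_apply]
      split <;> simp
    have hnPz : ‖(Submodule.orthogonalProjectionOnto (stdSubspace N k) z : EuclideanSpace ℝ (Fin N))‖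
        = Real.sqrt Az := htrunc_norm z
    have hnPy : ‖(Submodule.orthogonalProjectionOnto (stdSubspace N k) y : EuclideanSpace ℝ (Fin N))‖
        = Real.sqrt Ay := by
      rw [htrunc_norm y]
      simp only [hyap, hAy]
    set s := sinTheta (stdSubspace N k) (colSpaceE (Matrix.diagonal σ * Ω)) with hs
    have hs0 : 0 ≤ s := norm_nonneg _
    rw [hnPz, hnz]
    rw [hnPy, hny] at hPy
    -- key comparison : √Az * √(Ay+By) ≤ √Ay * √(Az+Bz)
    have hcmp : Real.sqrt Az * Real.sqrt (Ay + By) ≤ Real.sqrt Ay * Real.sqrt (Az + Bz) := by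
      rw [← Real.sqrt_mul hAz0, ← Real.sqrt_mul hAy0]
      apply Real.sqrt_le_sqrt
      nlinarith [mul_le_mul_of_nonneg_right hAzAy hBy0, mul_le_mul_of_nonneg_left hByBz hAy0]
    rcases eq_or_lt_of_le (Real.sqrt_nonneg (Ay + By)) with hY | hY
    · -- ‖y‖ = 0 : then Ay = 0 hence Az = 0
      have h1 : Ay + By = 0 := by
        have h2 : Ay + By ≤ 0 := by
          by_contra hcon
          push_neg at hcon
          have := Real.sqrt_pos.2 hcon
          linarith [hY.symm.le]
        linarith
      have hAy' : Ay = 0 := by linarith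
      have hAz' : Az = 0 := le_antisymm (by linarith [hAzAy]) hAz0
      rw [hAz', Real.sqrt_zero]
      positivity
    · exact div_trick hcmp hPy hY (Real.sqrt_nonneg (Az + Bz))

end RRFAux

/-- Worst-case monotonicity: the largest principal angle of the randomized range finder is
stochastically smaller for the matrix with larger leading singular values and smaller tail
singular values: for all `t`,
`ℙ(sin θ₁(E_k, range(ΣΩ)) < t) ≤ ℙ(sin θ₁(E_k, range(Σ̂Ω)) < t)`. -/
theorem rrf_stochastic_monotonicity (N : ℕ) (hN : 1 ≤ N) (k p : ℕ) (hk1 : 1 ≤ k) (hkN : k ≤ N)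
    (σ σ' : Fin N → ℝ)
    (hσ_mono : ∀ i j : Fin N, i ≤ j → σ j ≤ σ i)
    (hσ'_mono : ∀ i j : Fin N, i ≤ j → σ' j ≤ σ' i)
    (hσ_nonneg : ∀ j, 0 ≤ σ j) (hσ'_nonneg : ∀ j, 0 ≤ σ' j)
    (h_lead : ∀ j : Fin N, (j : ℕ) < k → σ j ≤ σ' j)
    (h_tail : ∀ j : Fin N, k ≤ (j : ℕ) → σ' j ≤ σ j)
    (t : ℝ) :
    stdGaussMat N (k + p)
        {Ω | sinTheta (stdSubspace N k) (colSpaceE (Matrix.diagonal σ * Ω)) < t}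
      ≤ stdGaussMat N (k + p)
          {Ω | sinTheta (stdSubspace N k) (colSpaceE (Matrix.diagonal σ' * Ω)) < t} := by
  apply measure_mono
  intro Ω hΩ
  exact lt_of_le_of_lt
    (RRFAux.key_det σ σ' hσ_nonneg hσ'_nonneg h_lead h_tail Ω) hΩ
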